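/- (Lagrange inversion.) Let u ∈ ℚ⟦X⟧ be a formal power series with nonzero constant coefficient (hence invertible), let H = X·u (a power series of valuation 1), and let G ∈ ℚ⟦X⟧ be a power series with zero constant coefficient satisfying G(H(X)) = X (i.e., substituting H into G gives X). Then for all natural numbers n and k with 1 ≤ k ≤ n, one has n·[Xⁿ](G^k) = k·[X^{n−k}](u^{−n}), where [X^m] denotes the m-th coefficient. (Equivalently, [xⁿ]G^k = (k/n)[x^{−k}]H^{−n}.) -/

import Mathlib

/-- Composition `f ∘ g` of formal power series: substituting `g` (which is intended to
have zero constant coefficient) for the variable of `f`. -/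
noncomputable def psComp (f g : PowerSeries ℚ) : PowerSeries ℚ :=
  PowerSeries.mk fun n =>
    ∑ k ∈ Finset.range (n + 1), PowerSeries.coeff k f * PowerSeries.coeff n (g ^ k)

open PowerSeries Finset

lemma coeffPowZero {g : PowerSeries ℚ} (hg : constantCoeff g = 0)
    {i N : ℕ} (h : N < i) : coeff N (g ^ i) = 0 := by
  have hx : (X : PowerSeries ℚ) ∣ g := X_dvd_iff.mpr hg
  exact (X_pow_dvd_iff.mp (pow_dvd_pow_of_dvd hx i)) N h

lemma coeff_psComp_ext (f g : PowerSeries ℚ) (hg : constantCoeff g = 0)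
    {m n : ℕ} (hm : m ≤ n) :
    coeff m (psComp f g) = ∑ i ∈ range (n + 1), coeff i f * coeff m (g ^ i) := by
  rw [psComp, coeff_mk]
  apply Finset.sum_subset
  · exact range_subset_range.mpr (by omega)
  · intro i hi hni
    simp only [mem_range] at hi hni
    rw [coeffPowZero hg (by omega), mul_zero]

lemma psComp_mul (f1 f2 g : PowerSeries ℚ) (hg : constantCoeff g = 0) :
    psComp (f1 * f2) g = psComp f1 g * psComp f2 g := by
  ext n
  have hset : ((range (n+1)).biUnion (fun k => antidiagonal k)) =
      (range (n+1) ×ˢ range (n+1)).filter (fun p => p.1 + p.2 ≤ n) := by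
    ext p
    simp only [mem_biUnion, mem_range, Finset.HasAntidiagonal.mem_antidiagonal, mem_filter, mem_product]
    exact ⟨fun ⟨i, hi, he⟩ => by omega, fun h => ⟨p.1 + p.2, by omega, rfl⟩⟩
  have hdisj : (↑(range (n+1)) : Set ℕ).PairwiseDisjoint
      (fun k => (antidiagonal k : Finset (ℕ × ℕ))) := by
    intro a _ b _ hab
    simp only [Finset.disjoint_left]
    intro p hpa hpb
    rw [Finset.HasAntidiagonal.mem_antidiagonal] at hpa hpb
    exact hab (hpa ▸ hpb ▸ rfl)
  calc coeff n (psComp (f1 * f2) g)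
      = ∑ m ∈ range (n+1), coeff m (f1 * f2) * coeff n (g ^ m) := by
        rw [psComp, coeff_mk]
    _ = ∑ m ∈ range (n+1), ∑ p ∈ antidiagonal m,
          coeff p.1 f1 * coeff p.2 f2 * coeff n (g ^ (p.1 + p.2)) := by
        refine sum_congr rfl fun m hm => ?_
        rw [coeff_mul, sum_mul]
        refine sum_congr rfl fun p hp => ?_
        rw [Finset.HasAntidiagonal.mem_antidiagonal.mp hp]
    _ = ∑ p ∈ (range (n+1) ×ˢ range (n+1)).filter (fun p => p.1 + p.2 ≤ n),
          coeff p.1 f1 * coeff p.2 f2 * coeff n (g ^ (p.1 + p.2)) := by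
        rw [← hset, Finset.sum_biUnion hdisj]
    _ = ∑ p ∈ range (n+1) ×ˢ range (n+1),
          coeff p.1 f1 * coeff p.2 f2 * coeff n (g ^ (p.1 + p.2)) := by
        apply Finset.sum_subset (filter_subset _ _)
        intro p hp hnp
        simp only [mem_filter, mem_product] at hnp
        rw [coeffPowZero hg (by by_contra h; exact hnp ⟨(mem_product.mp hp), by omega⟩), mul_zero]
    _ = ∑ i ∈ range (n+1), ∑ j ∈ range (n+1),
          coeff i f1 * coeff j f2 * coeff n (g ^ (i + j)) := by
        rw [Finset.sum_product]
    _ = coeff n (psComp f1 g * psComp f2 g) := by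
        rw [coeff_mul]
        have h1 : ∀ p ∈ antidiagonal n,
            coeff p.1 (psComp f1 g) * coeff p.2 (psComp f2 g)
            = ∑ i ∈ range (n+1), ∑ j ∈ range (n+1),
                coeff i f1 * coeff j f2 * (coeff p.1 (g ^ i) * coeff p.2 (g ^ j)) := by
          intro p hp
          have hpn := Finset.HasAntidiagonal.mem_antidiagonal.mp hp
          rw [coeff_psComp_ext f1 g hg (n := n) (by omega),
              coeff_psComp_ext f2 g hg (n := n) (by omega), sum_mul_sum]
          exact sum_congr rfl fun i _ => sum_congr rfl fun j _ => by ring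
        rw [sum_congr rfl h1,
          Finset.sum_comm (s := antidiagonal n) (t := range (n+1))]
        refine sum_congr rfl fun i _ => ?_
        rw [Finset.sum_comm (s := antidiagonal n) (t := range (n+1))]
        refine sum_congr rfl fun j _ => ?_
        rw [pow_add, coeff_mul, mul_sum]

lemma psComp_pow (G g : PowerSeries ℚ) (hg : constantCoeff g = 0) {k : ℕ} (hk : 1 ≤ k) :
    psComp (G ^ k) g = (psComp G g) ^ k := by
  induction k, hk using Nat.le_induction with
  | base => rw [pow_one, pow_one]
  | succ m hm ih => rw [pow_succ, psComp_mul _ _ _ hg, ih, pow_succ]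

lemma deriv_umvn (u : PowerSeries ℚ) (hu : PowerSeries.constantCoeff u ≠ 0) (m' n' : ℕ) :
    d⁄dX ℚ (u ^ (m' + 1) * u⁻¹ ^ (n' + 1)) + (n' + 1 : ℕ) • (d⁄dX ℚ u * u ^ m' * u⁻¹ ^ (n' + 1))
      = (m' + 1 : ℕ) • (d⁄dX ℚ u * u ^ m' * u⁻¹ ^ (n' + 1)) := by
  have huv : u * u⁻¹ = 1 := PowerSeries.mul_inv_cancel u hu
  rw [Derivation.leibniz, Derivation.leibniz_pow, Derivation.leibniz_pow, derivative_inv']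
  simp only [smul_eq_mul, nsmul_eq_mul, Nat.add_sub_cancel, Nat.cast_add, Nat.cast_one]
  linear_combination (-((n' : ℚ⟦X⟧) + 1) * d⁄dX ℚ u * u ^ m' * u⁻¹ ^ (n' + 1)) * huv

lemma core (u : PowerSeries ℚ) (hu : PowerSeries.constantCoeff u ≠ 0) {m n : ℕ}
    (hm : 1 ≤ m) (hmn : m ≤ n) :
    PowerSeries.coeff (n-1)
        ((PowerSeries.X * u) ^ (m-1) * ((PowerSeries.X * d⁄dX ℚ u + u) * u⁻¹ ^ n))
      = if m = n then 1 else 0 := by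
  obtain ⟨m', rfl⟩ : ∃ m', m = m' + 1 := ⟨m - 1, by omega⟩
  obtain ⟨n', rfl⟩ : ∃ n', n = n' + 1 := ⟨n - 1, by omega⟩
  simp only [Nat.add_sub_cancel]
  rw [mul_pow, mul_assoc, coeff_X_pow_mul', if_pos (by omega : m' ≤ n')]
  have hp : u ^ m' * ((X * d⁄dX ℚ u + u) * u⁻¹ ^ (n' + 1))
      = X * (d⁄dX ℚ u * u ^ m' * u⁻¹ ^ (n' + 1)) + u ^ (m' + 1) * u⁻¹ ^ (n' + 1) := by
    ring
  rw [hp, map_add]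
  by_cases hcase : m' = n'
  · subst hcase
    rw [if_pos rfl, Nat.sub_self]
    have h1 : u ^ (m' + 1) * u⁻¹ ^ (m' + 1) = 1 := by
      rw [← mul_pow, PowerSeries.mul_inv_cancel u hu, one_pow]
    rw [h1]
    simp [constantCoeff_X]
  · rw [if_neg (by omega)]
    have hj : n' - m' = (n' - m' - 1) + 1 := by omega
    rw [hj, coeff_succ_X_mul]
    have hd := congrArg (PowerSeries.coeff (n' - m' - 1)) (deriv_umvn u hu m' n')
    simp only [map_add, map_nsmul, coeff_derivative] at hd
    simp only [nsmul_eq_mul] at hd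
    have hidx : n' - m' - 1 + 1 = n' - m' := by omega
    rw [hidx] at hd
    have hne : ((n' : ℚ) - m') ≠ 0 := by
      have h1 : (m' : ℚ) < n' := by exact_mod_cast (by omega : m' < n')
      intro h; linarith
    have hc : ((n' - m' - 1 : ℕ) : ℚ) + 1 = (n' : ℚ) - (m' : ℚ) := by
      rw [show n' - m' - 1 = n' - (m' + 1) by omega,
        Nat.cast_sub (by omega : m' + 1 ≤ n')]
      push_cast; ring
    rw [hc] at hd
    push_cast at hd
    have h2 : ((n' : ℚ) - m') *
        ((PowerSeries.coeff (n' - m' - 1)) (d⁄dX ℚ u * u ^ m' * u⁻¹ ^ (n' + 1)) +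
         (PowerSeries.coeff (n' - m')) (u ^ (m' + 1) * u⁻¹ ^ (n' + 1))) = 0 := by
      linear_combination hd
    rw [hidx]
    rcases mul_eq_zero.mp h2 with h | h
    · exact absurd h hne
    · exact h

/-- Lagrange inversion: if `H = X·u` with `u(0) ≠ 0` and `G` (with `G(0) = 0`) is a
compositional left inverse of `H`, i.e. `G(H(X)) = X`, then
`n·[Xⁿ](G^k) = k·[X^{n-k}](u^{-n})` for `1 ≤ k ≤ n`. -/
theorem lagrange_inversion (u G : PowerSeries ℚ)
    (hu : PowerSeries.constantCoeff u ≠ 0)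
    (hG0 : PowerSeries.constantCoeff G = 0)
    (hGH : psComp G (PowerSeries.X * u) = PowerSeries.X)
    (n k : ℕ) (hk : 1 ≤ k) (hkn : k ≤ n) :
    (n : ℚ) * PowerSeries.coeff n (G ^ k) =
      (k : ℚ) * PowerSeries.coeff (n - k) (u⁻¹ ^ n) := by
  have hXu0 : constantCoeff (X * u) = 0 := by
    rw [map_mul, constantCoeff_X, zero_mul]
  have hGk : psComp (G ^ k) (X * u) = X ^ k := by
    rw [psComp_pow G (X * u) hXu0 hk, hGH]
  set c : ℕ → ℚ := fun m => coeff m (G ^ k) with hc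
  set T : PowerSeries ℚ := ∑ m ∈ range (n + 1), C (c m) * (X * u) ^ m with hTdef
  have hT : ∀ j, j ≤ n → coeff j T = coeff j ((X : ℚ⟦X⟧) ^ k) := by
    intro j hj
    rw [hTdef, map_sum]
    simp only [coeff_C_mul]
    rw [← coeff_psComp_ext (G ^ k) (X * u) hXu0 hj, hGk]
  have hdT : d⁄dX ℚ T = ∑ m ∈ range (n + 1),
      C (c m) * ((m : ℕ) • ((X * u) ^ (m - 1) * (X * d⁄dX ℚ u + u))) := by
    rw [hTdef, map_sum]
    refine sum_congr rfl fun m _ => ?_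
    rw [Derivation.leibniz, Derivation.leibniz_pow, derivative_C, Derivation.leibniz,
      derivative_X]
    simp only [smul_eq_mul, smul_zero, mul_zero, add_zero, mul_one, zero_add]
  have hcong : ∀ (a b w : ℚ⟦X⟧) (J : ℕ), (∀ j, j ≤ J → coeff j a = coeff j b) →
      coeff J (a * w) = coeff J (b * w) := by
    intro a b w J h
    rw [coeff_mul, coeff_mul]
    refine sum_congr rfl fun p hp => ?_
    have := Finset.HasAntidiagonal.mem_antidiagonal.mp hp
    rw [h p.1 (by omega)]
  have hdc : ∀ j, j ≤ n - 1 → coeff j (d⁄dX ℚ T) = coeff j (d⁄dX ℚ ((X : ℚ⟦X⟧) ^ k)) := by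
    intro j hj
    rw [coeff_derivative, coeff_derivative, hT (j + 1) (by omega)]
  have E : coeff (n - 1) (d⁄dX ℚ T * u⁻¹ ^ n)
      = coeff (n - 1) (d⁄dX ℚ ((X : ℚ⟦X⟧) ^ k) * u⁻¹ ^ n) :=
    hcong _ _ _ _ hdc
  -- RHS computation
  have hRX : d⁄dX ℚ ((X : ℚ⟦X⟧) ^ k) = (k : ℕ) • (X : ℚ⟦X⟧) ^ (k - 1) := by
    rw [Derivation.leibniz_pow, derivative_X, smul_eq_mul, mul_one]
  have hR : coeff (n - 1) (d⁄dX ℚ ((X : ℚ⟦X⟧) ^ k) * u⁻¹ ^ n)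
      = (k : ℚ) * coeff (n - k) (u⁻¹ ^ n) := by
    rw [hRX, smul_mul_assoc, map_nsmul, nsmul_eq_mul]
    rw [coeff_X_pow_mul', if_pos (by omega : k - 1 ≤ n - 1),
      show n - 1 - (k - 1) = n - k by omega]
  -- LHS computation
  have hL : coeff (n - 1) (d⁄dX ℚ T * u⁻¹ ^ n) = (n : ℚ) * c n := by
    rw [hdT, sum_mul, map_sum]
    rw [Finset.sum_congr rfl (fun m hm => show
        coeff (n - 1) (C (c m) * ((m : ℕ) • ((X * u) ^ (m - 1) * (X * d⁄dX ℚ u + u)))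
            * u⁻¹ ^ n)
          = if m = n then (n : ℚ) * c n else 0 from ?_)]
    · rw [Finset.sum_ite_eq' (range (n + 1)) n (fun _ => (n : ℚ) * c n),
        if_pos (self_mem_range_succ n)]
    · by_cases hm0 : m = 0
      · subst hm0
        simp only [zero_smul, mul_zero, zero_mul, map_zero]
        rw [if_neg (by omega)]
      · have hm1 : 1 ≤ m := by omega
        have hmn : m ≤ n := by simpa [Nat.lt_succ_iff] using mem_range.mp hm
        rw [mul_smul_comm, smul_mul_assoc, map_nsmul, nsmul_eq_mul, mul_assoc,
          coeff_C_mul, mul_assoc, core u hu hm1 hmn]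
        split_ifs with h
        · subst h; ring
        · ring
  rw [show coeff n (G ^ k) = c n from rfl, ← hL, E, hR]
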